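/- Fix a real number r with 0 < r < 1, and define U(k,r) = (r/k) · ∏_{i=1}^{k-1} (1 + r/i) for natural numbers k ≥ 1. Then U(k,r) tends to 0 as k tends to infinity. -/

import Mathlib

open Filter in
/-- For a fixed supply forecast error rate `0 < r < 1`, the underdelivery
fraction `U(k,r) = (r/k) · ∏_{i=1}^{k-1} (1 + r/i)` tends to `0` as the number
of optimization cycles `k` tends to infinity. -/
theorem underdelivery_tendsto_zero (r : ℝ) (hr0 : 0 < r) (hr1 : r < 1) :
    Tendsto (fun k : ℕ =>
        (r / (k : ℝ)) * ∏ i ∈ Finset.Icc 1 (k - 1), (1 + r / (i : ℝ)))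
      atTop (nhds 0) := by
  have hlim : Tendsto (fun k : ℕ => r * Real.exp r * (k : ℝ) ^ (r - 1))
      atTop (nhds 0) := by
    have h1 : Tendsto (fun x : ℝ => x ^ (-(1 - r))) atTop (nhds 0) :=
      tendsto_rpow_neg_atTop (by linarith)
    have h2 : Tendsto (fun k : ℕ => (k : ℝ) ^ (r - 1)) atTop (nhds 0) := by
      have := h1.comp tendsto_natCast_atTop_atTop (α := ℕ)
      simpa [Function.comp_def] using this
    simpa using h2.const_mul (r * Real.exp r)
  refine squeeze_zero' ?_ ?_ hlim
  · filter_upwards [eventually_ge_atTop 1] with k hk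
    have hk0 : (0 : ℝ) < k := by exact_mod_cast hk
    apply mul_nonneg (by positivity)
    apply Finset.prod_nonneg
    intro i hi
    have hi1 : 1 ≤ i := (Finset.mem_Icc.mp hi).1
    have : (0:ℝ) < i := by exact_mod_cast hi1
    positivity
  · filter_upwards [eventually_ge_atTop 1] with k hk
    have hk0 : (0 : ℝ) < k := by exact_mod_cast hk
    have hprod : ∏ i ∈ Finset.Icc 1 (k - 1), (1 + r / (i : ℝ)) ≤
        Real.exp (r * (1 + Real.log k)) := by
      have h1 : ∏ i ∈ Finset.Icc 1 (k - 1), (1 + r / (i : ℝ)) ≤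
          ∏ i ∈ Finset.Icc 1 (k - 1), Real.exp (r / (i : ℝ)) := by
        apply Finset.prod_le_prod
        · intro i hi
          have hi1 : 1 ≤ i := (Finset.mem_Icc.mp hi).1
          have : (0:ℝ) < i := by exact_mod_cast hi1
          positivity
        · intro i _
          linarith [Real.add_one_le_exp (r / (i : ℝ))]
      rw [← Real.exp_sum] at h1
      refine h1.trans (Real.exp_le_exp.mpr ?_)
      have hsum : ∑ i ∈ Finset.Icc 1 (k - 1), (r / (i : ℝ)) =
          r * ((harmonic (k - 1) : ℚ) : ℝ) := by
        rw [harmonic_eq_sum_Icc]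
        push_cast
        rw [Finset.mul_sum]
        exact Finset.sum_congr rfl (fun i _ => by rw [div_eq_mul_inv])
      rw [hsum]
      have hlog : Real.log (k - 1 : ℕ) ≤ Real.log k := by
        rcases eq_or_ne (k-1) 0 with h0 | h0
        · simp [h0]; exact Real.log_nonneg (by exact_mod_cast hk)
        · exact Real.log_le_log (by positivity) (by exact_mod_cast Nat.sub_le k 1)
      have := harmonic_le_one_add_log (k - 1)
      nlinarith
    have hbound : (r / (k : ℝ)) * ∏ i ∈ Finset.Icc 1 (k - 1), (1 + r / (i : ℝ)) ≤
        (r / (k : ℝ)) * Real.exp (r * (1 + Real.log k)) :=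
      mul_le_mul_of_nonneg_left hprod (by positivity)
    refine hbound.trans_eq ?_
    rw [mul_add, mul_one, Real.exp_add, ← Real.log_rpow hk0, Real.exp_log (by positivity)]
    rw [Real.rpow_sub hk0, Real.rpow_one]
    ring
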